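/- Every 2-coloring of {1,...,n} has at least n²/22 − C·n monochromatic Schur triples, for some absolute constant C independent of n and the coloring. -/

import Mathlib

open Finset

/-- Number of monochromatic Schur triples (i, j, i+j), i < j, i+j ≤ n, of a 2-coloring c. -/
def schurCount (n : ℕ) (c : ℕ → Bool) : ℕ :=
  ((Finset.Icc 1 n ×ˢ Finset.Icc 1 n).filter
    (fun p => p.1 < p.2 ∧ p.1 + p.2 ≤ n ∧ c p.1 = c p.2 ∧ c p.2 = c (p.1 + p.2))).card

/-! ### Auxiliary definitions -/

/-- DP certificate function. -/
noncomputable def Usq (t y : ℝ) : ℝ := if 3*y ≤ 2*t then (2*t+y)^2/8 else 2*y*t - y^2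

/-- Quadratic form `∑_{a+b ≤ n} x_a x_b`. -/
noncomputable def Qsum (n : ℕ) (x : ℕ → ℝ) : ℝ :=
  ∑ p ∈ (Icc 1 n ×ˢ Icc 1 n).filter (fun p => p.1 + p.2 ≤ n), x p.1 * x p.2

/-- `∑_{1 ≤ i ≤ n} x i`. -/
noncomputable def msum (n : ℕ) (x : ℕ → ℝ) : ℝ := ∑ i ∈ Icc 1 n, x i

/-! ### The analytic certificate -/

lemma L1 (K c : ℝ) : Usq K c ≤ 3/2*c^2 + 6/11*K^2 := by
  unfold Usq
  split_ifs with h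
  · nlinarith [sq_nonneg (11*c - 2*K)]
  · nlinarith [sq_nonneg (5*c - 2*K), sq_nonneg K]

lemma L2 (t y y' d : ℝ) (ht : 0 ≤ t) (hy : 0 ≤ y) (hy' : 0 ≤ y')
    (h1 : y - y' ≤ d) (h2 : y' - y ≤ d) (hd : d ≤ 2) (hyt : y ≤ 2*t+1) :
    (2-d)*y + Usq t y - Usq (t+1) y' ≤ 10 := by
  have hd0 : 0 ≤ d := by linarith
  unfold Usq
  split_ifs with hA hB hB
  · nlinarith [mul_nonneg (sub_nonneg.2 hd) hy, sq_nonneg (y - y'), mul_nonneg ht hd0]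
  · nlinarith [mul_nonneg (sub_nonneg.2 hd) hy, sq_nonneg (y - y'), mul_nonneg ht hd0,
      sq_nonneg (2*t - 3*y')]
  · nlinarith [mul_nonneg (sub_nonneg.2 hd) hy, sq_nonneg (y - y'), mul_nonneg ht hd0,
      sq_nonneg (2*t - 3*y)]
  · nlinarith [mul_nonneg (sub_nonneg.2 hd) hy, sq_nonneg (y - y'), mul_nonneg ht hd0,
      mul_nonneg hd0 hy']

/-! ### Shift identity for `Qsum` -/

lemma sumshift (k : ℕ) (x : ℕ → ℝ) : (∑ i ∈ Icc 1 k, x (i+1)) = ∑ i ∈ Icc 2 (k+1), x i := by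
  apply Finset.sum_nbij' (fun i => i+1) (fun i => i-1)
  · intro a ha; simp only [mem_Icc] at ha ⊢; omega
  · intro a ha; simp only [mem_Icc] at ha ⊢; omega
  · intro a ha; simp only [mem_Icc] at ha ⊢; omega
  · intro a ha; simp only [mem_Icc] at ha ⊢; omega
  · intro a ha; rfl

lemma Qshift (n : ℕ) (hn : 2 ≤ n) (x : ℕ → ℝ) :
    Qsum n x = Qsum (n-2) (fun i => x (i+1))
      + 2 * x 1 * (∑ i ∈ Icc 2 (n-1), x i) + x 1 * x 1 := by
  classical
  unfold Qsum
  rw [← Finset.sum_filter_add_sum_filter_not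
      ((Icc 1 n ×ˢ Icc 1 n).filter (fun p => p.1 + p.2 ≤ n)) (fun p => p.1 = 1)]
  rw [← Finset.sum_filter_add_sum_filter_not
      ((((Icc 1 n ×ˢ Icc 1 n).filter (fun p => p.1 + p.2 ≤ n))).filter (fun p => ¬ p.1 = 1))
      (fun p => p.2 = 1)]
  have e1 : (∑ p ∈ (((Icc 1 n ×ˢ Icc 1 n).filter (fun p => p.1 + p.2 ≤ n))).filter
      (fun p => p.1 = 1), x p.1 * x p.2) = ∑ i ∈ Icc 1 (n-1), x 1 * x i := by
    apply Finset.sum_nbij' (fun p => p.2) (fun i => (1, i))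
    · intro a ha; simp only [mem_filter, mem_product, mem_Icc] at ha ⊢; omega
    · intro a ha; simp only [mem_Icc] at ha
      simp only [mem_filter, mem_product, mem_Icc, and_true]; omega
    · intro a ha; simp only [mem_filter, mem_product, mem_Icc] at ha
      have h1 : a.1 = 1 := ha.2
      exact Prod.ext h1.symm rfl
    · intro a ha; rfl
    · intro a ha; simp only [mem_filter, mem_product, mem_Icc] at ha
      rw [ha.2]
  have e2 : (∑ p ∈ ((((Icc 1 n ×ˢ Icc 1 n).filter (fun p => p.1 + p.2 ≤ n))).filter
      (fun p => ¬ p.1 = 1)).filter (fun p => p.2 = 1), x p.1 * x p.2)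
      = ∑ i ∈ Icc 2 (n-1), x 1 * x i := by
    apply Finset.sum_nbij' (fun p => p.1) (fun i => (i, 1))
    · intro a ha; simp only [mem_filter, mem_product, mem_Icc] at ha ⊢; omega
    · intro a ha; simp only [mem_Icc] at ha
      simp only [mem_filter, mem_product, mem_Icc, and_true]; omega
    · intro a ha; simp only [mem_filter, mem_product, mem_Icc] at ha
      have h1 : a.2 = 1 := ha.2
      exact Prod.ext rfl h1.symm
    · intro a ha; rfl
    · intro a ha; simp only [mem_filter, mem_product, mem_Icc] at ha
      rw [ha.2, mul_comm]
  have e3 : (∑ p ∈ ((((Icc 1 n ×ˢ Icc 1 n).filter (fun p => p.1 + p.2 ≤ n))).filter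
      (fun p => ¬ p.1 = 1)).filter (fun p => ¬ p.2 = 1), x p.1 * x p.2)
      = ∑ p ∈ (Icc 1 (n-2) ×ˢ Icc 1 (n-2)).filter (fun p => p.1 + p.2 ≤ n-2),
          x (p.1+1) * x (p.2+1) := by
    apply Finset.sum_nbij' (fun p => (p.1 - 1, p.2 - 1)) (fun p => (p.1 + 1, p.2 + 1))
    · intro a ha; simp only [mem_filter, mem_product, mem_Icc] at ha ⊢; omega
    · intro a ha; simp only [mem_filter, mem_product, mem_Icc] at ha ⊢; omega
    · intro a ha; simp only [mem_filter, mem_product, mem_Icc] at ha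
      have h1 : a.1 - 1 + 1 = a.1 := by omega
      have h2 : a.2 - 1 + 1 = a.2 := by omega
      exact Prod.ext h1 h2
    · intro a ha; rfl
    · intro a ha; simp only [mem_filter, mem_product, mem_Icc] at ha
      have h1 : a.1 - 1 + 1 = a.1 := by omega
      have h2 : a.2 - 1 + 1 = a.2 := by omega
      rw [h1, h2]
  rw [e1, e2, e3]
  have hicc : (Icc 1 (n-1)) = insert 1 (Icc 2 (n-1)) := by
    ext a; simp only [mem_insert, mem_Icc]; omega
  rw [hicc, Finset.sum_insert (by simp)]
  rw [← Finset.mul_sum]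
  ring

/-! ### The core induction -/

lemma abs_msum_le (n : ℕ) (x : ℕ → ℝ) (hx : ∀ i, x i = 1 ∨ x i = -1) :
    |∑ i ∈ Icc 2 (n+1), x i| ≤ (n : ℝ) := by
  calc |∑ i ∈ Icc 2 (n+1), x i| ≤ ∑ i ∈ Icc 2 (n+1), |x i| := Finset.abs_sum_le_sum_abs _ _
    _ = ∑ i ∈ Icc 2 (n+1), 1 := by
        apply Finset.sum_congr rfl; intro i _
        rcases hx i with h | h <;> rw [h] <;> norm_num
    _ = (n : ℝ) := by simp [Nat.card_Icc]

lemma core : ∀ (n : ℕ) (x : ℕ → ℝ), (∀ i, x i = 1 ∨ x i = -1) →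
    (msum n x)^2/2 - Usq ((n/2 : ℕ) : ℝ) |msum n x| - 11*((n/2 : ℕ) : ℝ) - 1 - (n:ℝ)/2
      ≤ Qsum n x := by
  intro n
  induction n using Nat.strong_induction_on with
  | _ n ih =>
    match n with
    | 0 =>
      intro x hx
      have h0 : msum 0 x = 0 := by simp [msum]
      have hq : Qsum 0 x = 0 := by simp [Qsum]
      rw [h0, hq]
      simp [Usq]
    | 1 =>
      intro x hx
      have h0 : msum 1 x = x 1 := by simp [msum]
      have hq : Qsum 1 x = 0 := by
        unfold Qsum
        rw [Finset.sum_eq_zero]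
        intro p hp
        simp only [mem_filter, mem_product, mem_Icc] at hp
        omega
      have habs : |x 1| = 1 := by rcases hx 1 with h | h <;> rw [h] <;> norm_num
      rw [h0, hq, habs]
      have h1 : Usq ((1/2 : ℕ) : ℝ) 1 = -1 := by norm_num [Usq]
      rw [h1]
      have h2 : (x 1)^2 = 1 := by rcases hx 1 with h | h <;> rw [h] <;> norm_num
      rw [h2]
      norm_num
    | (n+2) =>
      intro x hx
      have hQ := Qshift (n+2) (by omega) x
      simp only [Nat.add_sub_cancel] at hQ
      rw [show n+2-1 = n+1 from by omega] at hQ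
      set x' : ℕ → ℝ := fun i => x (i+1) with hx'def
      have hx' : ∀ i, x' i = 1 ∨ x' i = -1 := fun i => hx (i+1)
      have IH := ih n (by omega) x' hx'
      set a := x 1 with hadef
      set b := x (n+2) with hbdef
      set s := ∑ i ∈ Icc 2 (n+1), x i with hsdef
      have hm' : msum n x' = s := by
        unfold msum; exact sumshift n x
      have hm : msum (n+2) x = a + s + b := by
        unfold msum
        rw [show Icc 1 (n+2) = insert 1 (Icc 2 (n+2)) by ext i; simp [mem_Icc]; omega]
        rw [Finset.sum_insert (by simp), Finset.sum_Icc_succ_top (by omega : 2 ≤ n+2)]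
        ring
      have hK : (((n+2)/2 : ℕ) : ℝ) = ((n/2 : ℕ) : ℝ) + 1 := by
        have : (n+2)/2 = n/2 + 1 := by omega
        rw [this]; push_cast; ring
      set τ : ℝ := ((n/2 : ℕ) : ℝ) with hτdef
      have hτ0 : 0 ≤ τ := by positivity
      have ha2 : a^2 = 1 := by rcases hx 1 with h | h <;> rw [hadef, h] <;> norm_num
      have hb2 : b^2 = 1 := by rcases hx (n+2) with h | h <;> rw [hbdef, h] <;> norm_num
      have hab : a * b ≤ 1 := by
        rcases hx 1 with h | h <;> rcases hx (n+2) with h' | h' <;>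
          rw [hadef, hbdef, h, h'] <;> norm_num
      have hd2 : |a + b| ≤ 2 := by
        rcases hx 1 with h | h <;> rcases hx (n+2) with h' | h' <;>
          rw [hadef, hbdef, h, h'] <;> norm_num
      have hσabs : |a - b| = 2 - |a + b| := by
        rcases hx 1 with h | h <;> rcases hx (n+2) with h' | h' <;>
          rw [hadef, hbdef, h, h'] <;> norm_num
      have hσs : -((a - b) * s) ≤ (2 - |a + b|) * |s| := by
        rw [← hσabs]
        calc -((a-b)*s) ≤ |(a-b)*s| := neg_le_abs _
          _ = |a-b| * |s| := abs_mul _ _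
      have h1 : |s| - |a + s + b| ≤ |a + b| := by
        have h := abs_sub_abs_le_abs_sub s (a + s + b)
        rw [show s - (a + s + b) = -(a+b) by ring, abs_neg] at h
        exact h
      have h2 : |a + s + b| - |s| ≤ |a + b| := by
        have h := abs_sub_abs_le_abs_sub (a + s + b) s
        rw [show (a + s + b) - s = a + b by ring] at h
        exact h
      have hyt : |s| ≤ 2*τ + 1 := by
        have h := abs_msum_le n x hx
        have h2 : (n : ℝ) ≤ 2*τ + 1 := by
          rw [hτdef]
          have : n ≤ 2*(n/2) + 1 := by omega
          calc (n:ℝ) ≤ ((2*(n/2) + 1 : ℕ) : ℝ) := by exact_mod_cast this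
            _ = 2*((n/2 : ℕ):ℝ) + 1 := by push_cast; ring
        linarith
      have hL2 := L2 τ |s| |a + s + b| |a + b| hτ0 (abs_nonneg _) (abs_nonneg _)
        h1 h2 hd2 hyt
      rw [hm, hK, hm'] at *
      push_cast
      nlinarith [hL2, hσs, ha2, hb2, hab, IH, hQ, abs_nonneg s]

/-- The key quadratic-form lower bound. -/
lemma QM (n : ℕ) (x : ℕ → ℝ) (hx : ∀ i, x i = 1 ∨ x i = -1) :
    -(3/22)*(n:ℝ)^2 - 7*(n:ℝ) - 1 ≤ Qsum n x + (msum n x)^2 := by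
  have hcore := core n x hx
  have hL1 := L1 ((n/2 : ℕ) : ℝ) |msum n x|
  have habs : |msum n x|^2 = (msum n x)^2 := sq_abs _
  have hK1 : ((n/2 : ℕ) : ℝ) ≤ (n:ℝ)/2 := by
    have : 2*(n/2) ≤ n := by omega
    have h := (Nat.cast_le (α := ℝ)).2 this
    push_cast at h
    linarith
  have hK0 : 0 ≤ ((n/2 : ℕ) : ℝ) := by positivity
  have hn0 : 0 ≤ (n : ℝ) := by positivity
  nlinarith [hcore, hL1, habs, hK1, hK0, hn0]

/-! ### Counting lemmas -/

lemma sum_icc_id (h : ℕ) : ∑ i ∈ Icc 1 h, (i : ℝ) = h*(h+1)/2 := by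
  induction h with
  | zero => simp
  | succ h ih =>
    rw [Finset.sum_Icc_succ_top (by omega : 1 ≤ h+1), ih]
    push_cast; ring

lemma Tbound (n : ℕ) :
    (n:ℝ)^2/4 - n ≤ (((Icc 1 n ×ˢ Icc 1 n).filter
      (fun p => p.1 < p.2 ∧ p.1 + p.2 ≤ n)).card : ℝ) := by
  classical
  set P := ((Icc 1 n ×ˢ Icc 1 n).filter (fun p => p.1 < p.2 ∧ p.1 + p.2 ≤ n)) with hP
  have hcard : P.card = ∑ i ∈ Icc 1 n, (P.filter (fun p => p.1 = i)).card := by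
    apply Finset.card_eq_sum_card_fiberwise
    intro p hp
    simp only [Finset.mem_coe, hP, mem_filter, mem_product] at hp
    exact hp.1.1
  have hfib : ∀ i, 1 ≤ i → (P.filter (fun p => p.1 = i)).card = (n - i - i : ℕ) := by
    intro i hi1
    have : P.filter (fun p => p.1 = i) = {i} ×ˢ Ioc i (n - i) := by
      ext p
      simp only [hP, mem_filter, mem_product, mem_Icc, mem_singleton, mem_Ioc]
      omega
    rw [this, Finset.card_product, Finset.card_singleton, Nat.card_Ioc]
    omega
  have hsub : ∑ i ∈ Icc 1 (n/2), (n - i - i : ℕ) ≤ P.card := by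
    rw [hcard]
    rw [Finset.sum_congr rfl (fun i hi => hfib i (by simp only [mem_Icc] at hi; omega))]
    apply Finset.sum_le_sum_of_subset
    apply Finset.Icc_subset_Icc_right
    omega
  have hval : ((∑ i ∈ Icc 1 (n/2), (n - i - i : ℕ) : ℕ) : ℝ)
      = (n/2 : ℕ) * n - ((n/2 : ℕ) : ℝ)*((n/2 : ℕ) : ℝ) - (n/2 : ℕ) := by
    push_cast
    rw [Finset.sum_congr rfl (fun i hi => by
      simp only [mem_Icc] at hi
      have h2i : i + i ≤ n := by omega
      have : ((n - i - i : ℕ) : ℝ) = (n : ℝ) - 2*i := by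
        push_cast [Nat.sub_sub]; rw [Nat.cast_sub h2i]; push_cast; ring
      exact this)]
    rw [Finset.sum_sub_distrib, Finset.sum_const, Nat.card_Icc]
    rw [← Finset.mul_sum, sum_icc_id]
    push_cast
    ring
  have hle : ((∑ i ∈ Icc 1 (n/2), (n - i - i : ℕ) : ℕ) : ℝ) ≤ (P.card : ℝ) := by
    exact_mod_cast hsub
  rw [hval] at hle
  set k : ℝ := ((n/2 : ℕ) : ℝ) with hk
  have hk1 : 2*k ≤ n := by
    rw [hk]
    have : 2*(n/2) ≤ n := by omega
    exact_mod_cast this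
  have hk2 : (n:ℝ) - 1 ≤ 2*k := by
    rw [hk]
    have : n ≤ 2*(n/2) + 1 := by omega
    have h3 := (Nat.cast_le (α := ℝ)).2 this
    push_cast at h3
    linarith
  nlinarith [mul_nonneg (sub_nonneg.2 hk1) (sub_nonneg.2 hk2), hle]

lemma msq_eq (n : ℕ) (x : ℕ → ℝ) :
    (msum n x)^2 = ∑ p ∈ (Icc 1 n ×ˢ Icc 1 n), x p.1 * x p.2 := by
  rw [pow_two, msum, Finset.sum_mul_sum, Finset.sum_product]

lemma swap_sum (n : ℕ) (x : ℕ → ℝ) (pr : ℕ × ℕ → Prop) [DecidablePred pr]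
    (hpr : ∀ p : ℕ × ℕ, pr p ↔ pr (p.2, p.1)) (f : ℕ → ℕ → ℝ) :
    ∑ p ∈ (Icc 1 n ×ˢ Icc 1 n).filter (fun p => pr p ∧ p.2 < p.1), f p.1 p.2
      = ∑ p ∈ (Icc 1 n ×ˢ Icc 1 n).filter (fun p => pr p ∧ p.1 < p.2), f p.2 p.1 := by
  apply Finset.sum_nbij' (fun p => (p.2, p.1)) (fun p => (p.2, p.1))
  · intro a ha
    simp only [mem_filter, mem_product, mem_Icc] at ha ⊢
    exact ⟨⟨ha.1.2, ha.1.1⟩, (hpr a).1 ha.2.1, ha.2.2⟩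
  · intro a ha
    simp only [mem_filter, mem_product, mem_Icc] at ha ⊢
    exact ⟨⟨ha.1.2, ha.1.1⟩, (hpr a).1 ha.2.1, ha.2.2⟩
  · intro a _; rfl
  · intro a _; rfl
  · intro a _; rfl

lemma trichot (n : ℕ) (pr : ℕ × ℕ → Prop) [DecidablePred pr] (f : ℕ × ℕ → ℝ) :
    ∑ p ∈ (Icc 1 n ×ˢ Icc 1 n).filter pr, f p
      = (∑ p ∈ (Icc 1 n ×ˢ Icc 1 n).filter (fun p => pr p ∧ p.1 < p.2), f p)
        + (∑ p ∈ (Icc 1 n ×ˢ Icc 1 n).filter (fun p => pr p ∧ p.2 < p.1), f p)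
        + (∑ p ∈ (Icc 1 n ×ˢ Icc 1 n).filter (fun p => pr p ∧ p.1 = p.2), f p) := by
  classical
  rw [← Finset.sum_filter_add_sum_filter_not ((Icc 1 n ×ˢ Icc 1 n).filter pr)
      (fun p => p.1 < p.2)]
  rw [← Finset.sum_filter_add_sum_filter_not (((Icc 1 n ×ˢ Icc 1 n).filter pr).filter
      (fun p => ¬ p.1 < p.2)) (fun p => p.2 < p.1)]
  simp only [Finset.filter_filter]
  have e1 : (Icc 1 n ×ˢ Icc 1 n).filter (fun p => (pr p ∧ ¬ p.1 < p.2) ∧ p.2 < p.1)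
      = (Icc 1 n ×ˢ Icc 1 n).filter (fun p => pr p ∧ p.2 < p.1) := by
    apply Finset.filter_congr; intro p _
    constructor
    · rintro ⟨⟨h1, _⟩, h3⟩; exact ⟨h1, h3⟩
    · rintro ⟨h1, h3⟩; exact ⟨⟨h1, by omega⟩, h3⟩
  have e2 : (Icc 1 n ×ˢ Icc 1 n).filter (fun p => (pr p ∧ ¬ p.1 < p.2) ∧ ¬ p.2 < p.1)
      = (Icc 1 n ×ˢ Icc 1 n).filter (fun p => pr p ∧ p.1 = p.2) := by
    apply Finset.filter_congr; intro p _
    constructor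
    · rintro ⟨⟨h1, h2⟩, h3⟩; exact ⟨h1, by omega⟩
    · rintro ⟨h1, h3⟩; exact ⟨⟨h1, by omega⟩, by omega⟩
  rw [e1, e2]
  ring

lemma diag_sum (n : ℕ) (x : ℕ → ℝ) (hx : ∀ i, x i = 1 ∨ x i = -1)
    (pr : ℕ × ℕ → Prop) [DecidablePred pr] :
    ∑ p ∈ (Icc 1 n ×ˢ Icc 1 n).filter (fun p => pr p ∧ p.1 = p.2), x p.1 * x p.2
      = (((Icc 1 n ×ˢ Icc 1 n).filter (fun p => pr p ∧ p.1 = p.2)).card : ℝ) := by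
  rw [Finset.card_eq_sum_ones, Nat.cast_sum]
  apply Finset.sum_congr rfl
  intro p hp
  simp only [mem_filter] at hp
  rw [← hp.2.2]
  rcases hx p.1 with h | h <;> rw [h] <;> norm_num

lemma diagcard_le (n : ℕ) (pr : ℕ × ℕ → Prop) [DecidablePred pr]
    (hpr : ∀ p q : ℕ × ℕ, pr p → pr q → p.1 = q.1 → p.2 = q.2) :
    ((Icc 1 n ×ˢ Icc 1 n).filter pr).card ≤ n := by
  have h := Finset.card_le_card_of_injOn (f := fun p => p.1)
    (s := (Icc 1 n ×ˢ Icc 1 n).filter pr) (t := Icc 1 n) ?_ ?_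
  · simpa using h
  · intro p hp
    simp only [Finset.mem_coe, mem_filter, mem_product] at hp
    exact hp.1.1
  · intro p hp q hq hpq
    simp only [Finset.mem_coe, mem_filter, mem_product] at hp hq
    simp only at hpq
    have h2 := hpr p q hp.2 hq.2 hpq
    exact Prod.ext hpq h2

/-! ### Main theorem -/

theorem schurCount_lower_bound :
    ∃ C : ℝ, ∀ (n : ℕ) (c : ℕ → Bool),
      (n : ℝ) ^ 2 / 22 - C * n ≤ (schurCount n c : ℝ) := by
  classical
  use 2
  intro n c
  rcases Nat.eq_zero_or_pos n with hn0 | hn1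
  · subst hn0
    simp
  -- setup
  set x : ℕ → ℝ := fun i => if c i then 1 else -1 with hxdef
  have hx : ∀ i, x i = 1 ∨ x i = -1 := by
    intro i; by_cases h : c i <;> simp [hxdef, h]
  set P := ((Icc 1 n ×ˢ Icc 1 n).filter (fun p => p.1 < p.2 ∧ p.1 + p.2 ≤ n)) with hP
  -- Step 1 : schurCount as a sum over P
  have h1 : (schurCount n c : ℝ)
      = ∑ p ∈ P, (1 + x p.1 * x p.2 + x p.1 * x (p.1+p.2) + x p.2 * x (p.1+p.2))/4 := by
    have hset : ((Finset.Icc 1 n ×ˢ Finset.Icc 1 n).filter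
        (fun p => p.1 < p.2 ∧ p.1 + p.2 ≤ n ∧ c p.1 = c p.2 ∧ c p.2 = c (p.1 + p.2)))
        = P.filter (fun p => c p.1 = c p.2 ∧ c p.2 = c (p.1+p.2)) := by
      rw [hP, Finset.filter_filter]
      apply Finset.filter_congr
      intro p _
      tauto
    rw [schurCount, hset, Finset.card_filter]
    push_cast
    apply Finset.sum_congr rfl
    intro p _
    cases h1 : c p.1 <;> cases h2 : c p.2 <;> cases h3 : c (p.1 + p.2) <;>
      simp [hxdef, h1, h2, h3] <;> norm_num
  -- Step 2 : split the sum
  have h2 : ∑ p ∈ P, (1 + x p.1 * x p.2 + x p.1 * x (p.1+p.2) + x p.2 * x (p.1+p.2))/4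
      = ((P.card : ℝ) + (∑ p ∈ P, x p.1 * x p.2) + (∑ p ∈ P, x p.1 * x (p.1+p.2))
          + (∑ p ∈ P, x p.2 * x (p.1+p.2)))/4 := by
    rw [← Finset.sum_div]
    congr 1
    rw [Finset.sum_add_distrib, Finset.sum_add_distrib, Finset.sum_add_distrib,
      Finset.sum_const, nsmul_eq_mul, mul_one]
  set S1 := ∑ p ∈ P, x p.1 * x p.2 with hS1
  set SB := ∑ p ∈ P, x p.1 * x (p.1+p.2) with hSB
  set SC := ∑ p ∈ P, x p.2 * x (p.1+p.2) with hSC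
  -- Step 3 : Qsum = 2*S1 + D1c
  have hpr1 : ∀ p : ℕ × ℕ, (fun p : ℕ × ℕ => p.1 + p.2 ≤ n) p
      ↔ (fun p : ℕ × ℕ => p.1 + p.2 ≤ n) (p.2, p.1) := by intro p; simp; omega
  have heqP1 : ((Icc 1 n ×ˢ Icc 1 n).filter (fun p => p.1 + p.2 ≤ n ∧ p.1 < p.2)) = P := by
    rw [hP]; apply Finset.filter_congr; intro p _; tauto
  have h3 : Qsum n x = 2*S1
      + (((Icc 1 n ×ˢ Icc 1 n).filter (fun p => p.1 + p.2 ≤ n ∧ p.1 = p.2)).card : ℝ) := by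
    rw [Qsum, trichot n (fun p => p.1 + p.2 ≤ n) (fun p => x p.1 * x p.2)]
    have hsw : ∑ p ∈ (Icc 1 n ×ˢ Icc 1 n).filter (fun p => p.1 + p.2 ≤ n ∧ p.2 < p.1),
        x p.1 * x p.2
        = ∑ p ∈ (Icc 1 n ×ˢ Icc 1 n).filter (fun p => p.1 + p.2 ≤ n ∧ p.1 < p.2),
          x p.2 * x p.1 :=
      swap_sum n x _ hpr1 (fun a b => x a * x b)
    rw [hsw, diag_sum n x hx]
    have hmc : ∑ p ∈ (Icc 1 n ×ˢ Icc 1 n).filter (fun p => p.1 + p.2 ≤ n ∧ p.1 < p.2),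
        x p.2 * x p.1
        = ∑ p ∈ (Icc 1 n ×ˢ Icc 1 n).filter (fun p => p.1 + p.2 ≤ n ∧ p.1 < p.2),
          x p.1 * x p.2 := Finset.sum_congr rfl (fun p _ => mul_comm _ _)
    rw [hmc, heqP1]
    rw [hS1]; ring
  have hD1c : (((Icc 1 n ×ˢ Icc 1 n).filter
      (fun p => p.1 + p.2 ≤ n ∧ p.1 = p.2)).card : ℝ) ≤ n := by
    have := diagcard_le n (fun p => p.1 + p.2 ≤ n ∧ p.1 = p.2)
      (fun p q hp hq h => by omega)
    exact_mod_cast this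
  have hD1c0 : (0:ℝ) ≤ (((Icc 1 n ×ˢ Icc 1 n).filter
      (fun p => p.1 + p.2 ≤ n ∧ p.1 = p.2)).card : ℝ) := by positivity
  -- Step 4 : SB + SC as a sum over distinct pairs
  have hpr2 : ∀ p : ℕ × ℕ, (fun p : ℕ × ℕ => p.1 + p.2 ≤ n ∧ ¬ p.1 = p.2) p
      ↔ (fun p : ℕ × ℕ => p.1 + p.2 ≤ n ∧ ¬ p.1 = p.2) (p.2, p.1) := by
    intro p; simp; omega
  have h4 : SB + SC = ∑ p ∈ (Icc 1 n ×ˢ Icc 1 n).filter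
      (fun p => p.1 + p.2 ≤ n ∧ ¬ p.1 = p.2), x p.1 * x (p.1 + p.2) := by
    rw [trichot n (fun p => p.1 + p.2 ≤ n ∧ ¬ p.1 = p.2) (fun p => x p.1 * x (p.1+p.2))]
    have t1 : ((Icc 1 n ×ˢ Icc 1 n).filter
        (fun p => (p.1 + p.2 ≤ n ∧ ¬ p.1 = p.2) ∧ p.1 < p.2)) = P := by
      rw [hP]; apply Finset.filter_congr; intro p _
      constructor
      · rintro ⟨⟨ha, _⟩, hb⟩; exact ⟨hb, ha⟩
      · rintro ⟨ha, hb⟩; exact ⟨⟨hb, by omega⟩, ha⟩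
    have t2 : ∑ p ∈ (Icc 1 n ×ˢ Icc 1 n).filter
        (fun p => (p.1 + p.2 ≤ n ∧ ¬ p.1 = p.2) ∧ p.2 < p.1), x p.1 * x (p.1+p.2)
        = ∑ p ∈ (Icc 1 n ×ˢ Icc 1 n).filter
          (fun p => (p.1 + p.2 ≤ n ∧ ¬ p.1 = p.2) ∧ p.1 < p.2), x p.2 * x (p.2+p.1) :=
      swap_sum n x _ hpr2 (fun a b => x a * x (a+b))
    have t2' : ∑ p ∈ (Icc 1 n ×ˢ Icc 1 n).filter
        (fun p => (p.1 + p.2 ≤ n ∧ ¬ p.1 = p.2) ∧ p.1 < p.2), x p.2 * x (p.2+p.1)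
        = SC := by
      rw [t1, hSC]
      apply Finset.sum_congr rfl
      intro p _
      rw [Nat.add_comm]
    have t3 : ∑ p ∈ (Icc 1 n ×ˢ Icc 1 n).filter
        (fun p => (p.1 + p.2 ≤ n ∧ ¬ p.1 = p.2) ∧ p.1 = p.2), x p.1 * x (p.1+p.2) = 0 := by
      apply Finset.sum_eq_zero
      intro p hp
      simp only [mem_filter] at hp
      exact absurd hp.2.2 hp.2.1.2
    rw [t1, t2, t2', t3, hSB]
    ring
  -- Step 5 : bijection (i,j) ↦ (i, i+j)
  have h5 : ∑ p ∈ (Icc 1 n ×ˢ Icc 1 n).filter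
      (fun p => p.1 + p.2 ≤ n ∧ ¬ p.1 = p.2), x p.1 * x (p.1 + p.2)
      = ∑ q ∈ (Icc 1 n ×ˢ Icc 1 n).filter
        (fun q => q.1 < q.2 ∧ ¬ q.2 = 2*q.1), x q.1 * x q.2 := by
    apply Finset.sum_nbij' (fun p => (p.1, p.1 + p.2)) (fun q => (q.1, q.2 - q.1))
    · intro a ha; simp only [mem_filter, mem_product, mem_Icc] at ha ⊢; omega
    · intro a ha; simp only [mem_filter, mem_product, mem_Icc] at ha ⊢; omega
    · intro a ha; simp only [mem_filter, mem_product, mem_Icc] at ha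
      exact Prod.ext rfl (by omega)
    · intro a ha; simp only [mem_filter, mem_product, mem_Icc] at ha
      exact Prod.ext rfl (by omega)
    · intro a _; rfl
  -- Step 6 : split off the q.2 = 2 q.1 part
  have h6 : ∑ q ∈ (Icc 1 n ×ˢ Icc 1 n).filter (fun q => q.1 < q.2), x q.1 * x q.2
      = (∑ q ∈ (Icc 1 n ×ˢ Icc 1 n).filter
          (fun q => q.1 < q.2 ∧ q.2 = 2*q.1), x q.1 * x q.2)
        + ∑ q ∈ (Icc 1 n ×ˢ Icc 1 n).filter
          (fun q => q.1 < q.2 ∧ ¬ q.2 = 2*q.1), x q.1 * x q.2 := by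
    rw [← Finset.sum_filter_add_sum_filter_not
      ((Icc 1 n ×ˢ Icc 1 n).filter (fun q => q.1 < q.2)) (fun q => q.2 = 2*q.1)]
    simp only [Finset.filter_filter]
  -- Step 7 : m² over the square
  have hpr3 : ∀ p : ℕ × ℕ, (fun p : ℕ × ℕ => p.1 + p.2 ≤ 2*n) p
      ↔ (fun p : ℕ × ℕ => p.1 + p.2 ≤ 2*n) (p.2, p.1) := by intro p; simp; omega
  have hsq : (Icc 1 n ×ˢ Icc 1 n)
      = (Icc 1 n ×ˢ Icc 1 n).filter (fun p => p.1 + p.2 ≤ 2*n) :=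
    (Finset.filter_true_of_mem (fun p hp => by
        simp only [mem_product, mem_Icc] at hp; omega)).symm
  have h7 : (msum n x)^2 = 2*(∑ q ∈ (Icc 1 n ×ˢ Icc 1 n).filter
        (fun q => q.1 < q.2), x q.1 * x q.2)
      + (((Icc 1 n ×ˢ Icc 1 n).filter
          (fun p => (p.1 + p.2 ≤ 2*n) ∧ p.1 = p.2)).card : ℝ) := by
    conv_lhs => rw [msq_eq n x, hsq, trichot n (fun p => p.1 + p.2 ≤ 2*n)
      (fun p => x p.1 * x p.2)]
    have hsw : ∑ p ∈ (Icc 1 n ×ˢ Icc 1 n).filter (fun p => p.1 + p.2 ≤ 2*n ∧ p.2 < p.1),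
        x p.1 * x p.2
        = ∑ p ∈ (Icc 1 n ×ˢ Icc 1 n).filter (fun p => p.1 + p.2 ≤ 2*n ∧ p.1 < p.2),
          x p.2 * x p.1 :=
      swap_sum n x _ hpr3 (fun a b => x a * x b)
    have hmc : ∑ p ∈ (Icc 1 n ×ˢ Icc 1 n).filter (fun p => p.1 + p.2 ≤ 2*n ∧ p.1 < p.2),
        x p.2 * x p.1
        = ∑ p ∈ (Icc 1 n ×ˢ Icc 1 n).filter (fun p => p.1 + p.2 ≤ 2*n ∧ p.1 < p.2),
          x p.1 * x p.2 := Finset.sum_congr rfl (fun p _ => mul_comm _ _)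
    have heq : ((Icc 1 n ×ˢ Icc 1 n).filter (fun p => p.1 + p.2 ≤ 2*n ∧ p.1 < p.2))
        = ((Icc 1 n ×ˢ Icc 1 n).filter (fun q => q.1 < q.2)) := by
      apply Finset.filter_congr
      intro p hp
      simp only [mem_product, mem_Icc] at hp
      constructor
      · rintro ⟨_, h⟩; exact h
      · intro h; exact ⟨by omega, h⟩
    rw [hsw, hmc, diag_sum n x hx, heq]
    ring
  have hc3 : (((Icc 1 n ×ˢ Icc 1 n).filter
      (fun p => (p.1 + p.2 ≤ 2*n) ∧ p.1 = p.2)).card : ℝ) ≤ n := by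
    have := diagcard_le n (fun p => (p.1 + p.2 ≤ 2*n) ∧ p.1 = p.2)
      (fun p q hp hq h => by omega)
    exact_mod_cast this
  have hc30 : (0:ℝ) ≤ (((Icc 1 n ×ˢ Icc 1 n).filter
      (fun p => (p.1 + p.2 ≤ 2*n) ∧ p.1 = p.2)).card : ℝ) := by exact Nat.cast_nonneg _
  -- Step 8 : the 2a-diagonal is small
  have h8 : |(∑ q ∈ (Icc 1 n ×ˢ Icc 1 n).filter
      (fun q => q.1 < q.2 ∧ q.2 = 2*q.1), x q.1 * x q.2)| ≤ n := by
    have hcard : (((Icc 1 n ×ˢ Icc 1 n).filter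
        (fun q => q.1 < q.2 ∧ q.2 = 2*q.1)).card : ℝ) ≤ n := by
      have := diagcard_le n (fun q => q.1 < q.2 ∧ q.2 = 2*q.1)
        (fun p q hp hq h => by omega)
      exact_mod_cast this
    calc |(∑ q ∈ (Icc 1 n ×ˢ Icc 1 n).filter
        (fun q => q.1 < q.2 ∧ q.2 = 2*q.1), x q.1 * x q.2)|
        ≤ ∑ q ∈ (Icc 1 n ×ˢ Icc 1 n).filter
          (fun q => q.1 < q.2 ∧ q.2 = 2*q.1), |x q.1 * x q.2| :=
          Finset.abs_sum_le_sum_abs _ _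
      _ = (((Icc 1 n ×ˢ Icc 1 n).filter
          (fun q => q.1 < q.2 ∧ q.2 = 2*q.1)).card : ℝ) := by
          rw [Finset.card_eq_sum_ones, Nat.cast_sum]
          apply Finset.sum_congr rfl
          intro q _
          rcases hx q.1 with ha | ha <;> rcases hx q.2 with hb | hb <;>
            rw [ha, hb] <;> norm_num
      _ ≤ n := hcard
  -- Conclusion
  have hQM := QM n x hx
  have hT := Tbound n
  rw [← hP] at hT
  have hn1' : (1:ℝ) ≤ n := by exact_mod_cast hn1
  rw [h1, h2]
  have habs := abs_le.1 h8
  nlinarith [hQM, hT, h3, h4, h5, h6, h7, hD1c, hD1c0, hc3, hc30, habs.1, habs.2, hn1']
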